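/- Let A = k[[t^a, t^{a+1}]] with a ≥ 2, q < a, 0 < s ∈ H = ⟨a, a+1⟩ with s < aq. Write s = aℓ + r with 1 ≤ ℓ < q and 0 ≤ r < a (so r ≤ ℓ), and set p = (a−1) + (ℓ−q). Then the ideal I = (t^s) : 𝔪^q equals (t^s) + 𝔪^{p+1} + (t^{ap+i} : p−ℓ+r < i ≤ p). In particular, if r = 0 then I = (t^s) + 𝔪^p. -/

import Mathlib

set_option maxHeartbeats 1000000
set_option synthInstance.maxHeartbeats 1000000

open PowerSeries

/-- The numerical semigroup ring `k[[H]]`: power series supported on `H`. -/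
noncomputable def ssr (k : Type) [Field k] (H : AddSubmonoid ℕ) :
    Subalgebra k (PowerSeries k) where
  carrier := {f | ∀ n : ℕ, n ∉ H → PowerSeries.coeff n f = 0}
  mul_mem' := by
    intro f g hf hg n hn
    rw [Set.mem_setOf_eq] at hf hg
    rw [PowerSeries.coeff_mul]
    apply Finset.sum_eq_zero
    rintro ⟨i, j⟩ hij
    replace hij : i + j = n := by simpa using hij
    by_cases hi : i ∈ H
    · have hj : j ∉ H := fun hj => hn (hij ▸ H.add_mem hi hj)
      rw [hg j hj, mul_zero]
    · rw [hf i hi, zero_mul]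
  add_mem' := by
    intro f g hf hg n hn
    rw [Set.mem_setOf_eq] at hf hg
    rw [map_add, hf n hn, hg n hn, add_zero]
  one_mem' := by
    intro n hn
    have h0 : n ≠ 0 := fun h => hn (by rw [h]; exact H.zero_mem)
    simp [PowerSeries.coeff_one, h0]
  zero_mem' := by
    intro n _
    simp
  algebraMap_mem' := by
    intro r n hn
    have h0 : n ≠ 0 := fun h => hn (by rw [h]; exact H.zero_mem)
    simp [PowerSeries.algebraMap_apply, PowerSeries.coeff_C, h0]

/-- The monomial `t^n` as an element of `k[[H]]`, for `n ∈ H`. -/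
noncomputable def tp (k : Type) [Field k] (H : AddSubmonoid ℕ) (n : ℕ) (hn : n ∈ H) :
    ssr k H :=
  ⟨PowerSeries.X ^ n, by
    intro m hm
    rw [PowerSeries.coeff_X_pow]
    exact if_neg (fun h => hm (by rw [h]; exact hn))⟩

/-- The maximal ideal of `k[[H]]`, generated by the monomials `t^n`, `0 < n ∈ H`. -/
noncomputable def mIdeal (k : Type) [Field k] (H : AddSubmonoid ℕ) : Ideal (ssr k H) :=
  Ideal.span {x | ∃ n : ℕ, ∃ hn : n ∈ H, 0 < n ∧ x = tp k H n hn}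
section Infra

variable {k : Type} [Field k] {H : AddSubmonoid ℕ}

lemma ssr_coeff (f : ssr k H) {n : ℕ} (hn : n ∉ H) : PowerSeries.coeff n (f : PowerSeries k) = 0 :=
  f.2 n hn

lemma tp_val (n : ℕ) (hn : n ∈ H) : (tp k H n hn : PowerSeries k) = PowerSeries.X ^ n := rfl

lemma tp_mul (n m : ℕ) (hn : n ∈ H) (hm : m ∈ H) :
    tp k H n hn * tp k H m hm = tp k H (n + m) (H.add_mem hn hm) :=
  Subtype.ext (by simp [tp_val, pow_add])

/-- Exponent sets to monomial sets. -/
def tpSet (k : Type) [Field k] (H : AddSubmonoid ℕ) (E : Set ℕ) : Set (ssr k H) :=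
  {x | ∃ n ∈ E, ∃ hn : n ∈ H, x = tp k H n hn}

/-- "support of f is contained in E + H" -/
def expOK {k : Type} [Field k] {H : AddSubmonoid ℕ} (E : Set ℕ) (f : ssr k H) : Prop :=
  ∀ m : ℕ, PowerSeries.coeff m (f : PowerSeries k) ≠ 0 → ∃ n ∈ E, ∃ h ∈ H, m = n + h

lemma expOK_mono {E E' : Set ℕ} (hEE : E ⊆ E') {f : ssr k H} (hf : expOK E f) : expOK E' f :=
  fun m hm => by obtain ⟨n, hn, h, hh, rfl⟩ := hf m hm; exact ⟨n, hEE hn, h, hh, rfl⟩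

lemma expOK_of_mem_span {E : Set ℕ} {f : ssr k H} (hf : f ∈ Ideal.span (tpSet k H E)) :
    expOK E f := by
  refine Submodule.span_induction ?_ ?_ ?_ ?_ hf
  · rintro x ⟨n, hnE, hn, rfl⟩ m hm
    rw [tp_val, PowerSeries.coeff_X_pow] at hm
    split_ifs at hm with h
    · exact ⟨n, hnE, 0, H.zero_mem, by omega⟩
    · exact absurd rfl hm
  · intro m hm; simp at hm
  · intro x y _ _ hx hy m hm
    have : PowerSeries.coeff m ((x : PowerSeries k) + (y : PowerSeries k)) ≠ 0 := hm
    rw [map_add] at this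
    by_cases hx0 : PowerSeries.coeff m (x : PowerSeries k) = 0
    · exact hy m (by rw [hx0, zero_add] at this; exact this)
    · exact hx m hx0
  · intro c x _ hx m hm
    have hm' : PowerSeries.coeff m ((c : PowerSeries k) * (x : PowerSeries k)) ≠ 0 := hm
    rw [PowerSeries.coeff_mul] at hm'
    obtain ⟨⟨i, j⟩, hij, hne⟩ := Finset.exists_ne_zero_of_sum_ne_zero hm'
    replace hij : i + j = m := by simpa using hij
    have hi : PowerSeries.coeff i (c : PowerSeries k) ≠ 0 := fun h0 => hne (by rw [h0, zero_mul])
    have hj : PowerSeries.coeff j (x : PowerSeries k) ≠ 0 := fun h0 => hne (by rw [h0, mul_zero])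
    have hiH : i ∈ H := by by_contra hiH; exact hi (ssr_coeff c hiH)
    obtain ⟨n, hnE, h, hh, rfl⟩ := hx j hj
    exact ⟨n, hnE, h + i, H.add_mem hh hiH, by omega⟩


open Classical in
/-- restriction of a power series to a set of exponents -/
noncomputable def pres (f : PowerSeries k) (P : Set ℕ) : PowerSeries k :=
  PowerSeries.mk fun n => if n ∈ P then PowerSeries.coeff n f else 0

open Classical in
lemma coeff_pres (f : PowerSeries k) (P : Set ℕ) (n : ℕ) :
    PowerSeries.coeff n (pres f P) = if n ∈ P then PowerSeries.coeff n f else 0 :=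
  PowerSeries.coeff_mk n _

lemma pres_mem (f : ssr k H) (P : Set ℕ) : pres (f : PowerSeries k) P ∈ ssr k H := by
  intro n hn
  rw [coeff_pres]
  split_ifs with h
  · exact ssr_coeff f hn
  · rfl

/-- division by a monomial -/
lemma mem_span_tp_singleton {n : ℕ} (hn : n ∈ H) {f : ssr k H}
    (hf : ∀ m : ℕ, PowerSeries.coeff m (f : PowerSeries k) ≠ 0 → ∃ h ∈ H, m = n + h) :
    f ∈ Ideal.span {tp k H n hn} := by
  classical
  set g : PowerSeries k := PowerSeries.mk fun h => if h ∈ H then PowerSeries.coeff (n + h) (f : PowerSeries k) else 0 with hg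
  have hgm : g ∈ ssr k H := by
    intro m hm
    rw [hg, PowerSeries.coeff_mk, if_neg hm]
  rw [Ideal.mem_span_singleton]
  refine ⟨⟨g, hgm⟩, Subtype.ext ?_⟩
  have : ((tp k H n hn * ⟨g, hgm⟩ : ssr k H) : PowerSeries k) = PowerSeries.X ^ n * g := rfl
  rw [this]
  ext m
  rw [PowerSeries.coeff_X_pow_mul']
  split_ifs with h
  · rw [hg, PowerSeries.coeff_mk]
    split_ifs with h2
    · rw [Nat.add_sub_cancel' h]
    · rcases eq_or_ne (PowerSeries.coeff m (f : PowerSeries k)) 0 with h0 | h0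
      · simp [h0]
      · obtain ⟨hh, hhH, heq⟩ := hf m h0
        exact absurd (by rw [show m - n = hh by omega]; exact hhH) h2
  · rcases eq_or_ne (PowerSeries.coeff m (f : PowerSeries k)) 0 with h0 | h0
    · simp [h0]
    · obtain ⟨hh, hhH, heq⟩ := hf m h0
      omega

lemma tpSet_mono {E E' : Set ℕ} (h : E ⊆ E') : tpSet k H E ⊆ tpSet k H E' := by
  rintro x ⟨m, hm, hmH, rfl⟩; exact ⟨m, h hm, hmH, rfl⟩

lemma tpSet_union (E1 E2 : Set ℕ) :
    tpSet k H (E1 ∪ E2) = tpSet k H E1 ∪ tpSet k H E2 := by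
  ext x
  constructor
  · rintro ⟨n, hn | hn, hnH, rfl⟩
    · exact Or.inl ⟨n, hn, hnH, rfl⟩
    · exact Or.inr ⟨n, hn, hnH, rfl⟩
  · rintro (⟨n, hn, hnH, rfl⟩ | ⟨n, hn, hnH, rfl⟩)
    · exact ⟨n, Or.inl hn, hnH, rfl⟩
    · exact ⟨n, Or.inr hn, hnH, rfl⟩

lemma mem_span_of_expOK {E : Set ℕ} (hfin : E.Finite) (hE : ∀ n ∈ E, n ∈ H) {f : ssr k H}
    (hf : expOK E f) : f ∈ Ideal.span (tpSet k H E) := by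
  classical
  revert hE f
  refine Set.Finite.induction_on
    (motive := fun E _ => (∀ n ∈ E, n ∈ H) → ∀ f : ssr k H, expOK E f → f ∈ Ideal.span (tpSet k H E))
    E hfin ?_ ?_
  · intro hE f hf
    have : f = 0 := by
      apply Subtype.ext; ext m
      by_contra hne
      obtain ⟨n, hn, -⟩ := hf m (by simpa using hne)
      exact hn
    simp [this]
  · intro n E hnE hEfin ih hE f hf
    have hnH : n ∈ H := hE n (Set.mem_insert n E)
    set P : Set ℕ := {m | ∃ h ∈ H, m = n + h} with hP
    set f₁ : ssr k H := ⟨pres (f : PowerSeries k) P, pres_mem f P⟩ with hf₁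
    have hf1span : f₁ ∈ Ideal.span {tp k H n hnH} := by
      apply mem_span_tp_singleton
      intro m hm
      rw [hf₁] at hm
      simp only [coeff_pres] at hm
      split_ifs at hm with h
      · exact h
      · exact absurd rfl hm
    have hf2 : expOK E (f - f₁) := by
      intro m hm
      have hcoe : PowerSeries.coeff m ((f : PowerSeries k) - (f₁ : PowerSeries k)) ≠ 0 := hm
      rw [map_sub] at hcoe
      have hmP : m ∉ P := by
        intro hmP
        apply hcoe
        rw [hf₁]
        simp only [coeff_pres, if_pos hmP, sub_self]
      have hfm : PowerSeries.coeff m (f : PowerSeries k) ≠ 0 := by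
        intro h0
        apply hcoe
        rw [h0, hf₁]
        simp only [coeff_pres, if_neg hmP, h0, sub_self]
      obtain ⟨n', hn', h, hh, rfl⟩ := hf m hfm
      rcases hn' with rfl | hn'
      · exact absurd ⟨h, hh, rfl⟩ hmP
      · exact ⟨n', hn', h, hh, rfl⟩
    have h1 : f₁ ∈ Ideal.span (tpSet k H (insert n E)) := by
      refine Ideal.span_mono ?_ hf1span
      rintro x rfl
      exact ⟨n, Set.mem_insert n E, hnH, rfl⟩
    have h2 : f - f₁ ∈ Ideal.span (tpSet k H (insert n E)) :=
      Ideal.span_mono (tpSet_mono (Set.subset_insert n E))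
        (ih (fun n' hn' => hE n' (Set.mem_insert_of_mem n hn')) _ hf2)
    have : f = f₁ + (f - f₁) := by ring
    rw [this]
    exact Ideal.add_mem _ h1 h2

lemma mem_span_tpSet_iff {E : Set ℕ} (hfin : E.Finite) (hE : ∀ n ∈ E, n ∈ H) (f : ssr k H) :
    f ∈ Ideal.span (tpSet k H E) ↔ expOK E f := by
  exact ⟨expOK_of_mem_span, fun h => mem_span_of_expOK hfin hE h⟩

end Infra
section Arith

variable {k : Type} [Field k] {H : AddSubmonoid ℕ} {a : ℕ}

lemma HofLR (hH : H = AddSubmonoid.closure {a, a + 1}) {L R : ℕ} (hRL : R ≤ L) :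
    a * L + R ∈ H := by
  subst hH
  obtain ⟨d, rfl⟩ := Nat.exists_eq_add_of_le hRL
  have h1 : a ∈ AddSubmonoid.closure ({a, a + 1} : Set ℕ) :=
    AddSubmonoid.subset_closure (Set.mem_insert _ _)
  have h2 : a + 1 ∈ AddSubmonoid.closure ({a, a + 1} : Set ℕ) :=
    AddSubmonoid.subset_closure (Set.mem_insert_of_mem _ rfl)
  have he : a * (R + d) + R = d • a + R • (a + 1) := by
    simp only [smul_eq_mul]; ring
  rw [he]
  exact add_mem (nsmul_mem h1 d) (nsmul_mem h2 R)

lemma H_exists (hH : H = AddSubmonoid.closure {a, a + 1}) {n : ℕ} (hn : n ∈ H) :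
    ∃ L R : ℕ, R ≤ L ∧ n = a * L + R := by
  subst hH
  induction hn using AddSubmonoid.closure_induction with
  | mem x hx =>
    rcases hx with rfl | hx
    · exact ⟨1, 0, by omega, by ring⟩
    · rw [Set.mem_singleton_iff] at hx
      subst hx
      exact ⟨1, 1, le_refl 1, by ring⟩
  | zero => exact ⟨0, 0, le_refl 0, by ring⟩
  | add x y _ _ hx hy =>
    obtain ⟨L1, R1, h1, rfl⟩ := hx
    obtain ⟨L2, R2, h2, rfl⟩ := hy
    exact ⟨L1 + L2, R1 + R2, by omega, by ring⟩

lemma aux_unique {a L R L' R' : ℕ} (hR : R < a) (hR' : R' < a)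
    (h : a * L + R = a * L' + R') : L = L' ∧ R = R' := by
  rcases lt_trichotomy L L' with h1 | h1 | h1
  · have h2 : a * (L + 1) ≤ a * L' := Nat.mul_le_mul (le_refl a) h1
    have h3 : a * (L + 1) = a * L + a := by ring
    omega
  · subst h1
    omega
  · have h2 : a * (L' + 1) ≤ a * L := Nat.mul_le_mul (le_refl a) h1
    have h3 : a * (L' + 1) = a * L' + a := by ring
    omega

lemma H_norm {a : ℕ} (ha : 0 < a) : ∀ R L : ℕ, R ≤ L →
    ∃ L' R' : ℕ, R' < a ∧ R' ≤ L' ∧ a * L + R = a * L' + R' := by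
  intro R
  induction R using Nat.strong_induction_on with
  | _ R ih =>
    intro L hRL
    rcases Nat.lt_or_ge R a with h | h
    · exact ⟨L, R, h, hRL, rfl⟩
    · obtain ⟨R2, rfl⟩ := Nat.exists_eq_add_of_le h
      obtain ⟨L', R', h1, h2, h3⟩ := ih R2 (by omega) (L + 1) (by omega)
      refine ⟨L', R', h1, h2, ?_⟩
      have hx : a * (L + 1) = a * L + a := by ring
      omega

lemma H_canon (hH : H = AddSubmonoid.closure {a, a + 1}) (ha : 0 < a) {L R : ℕ} (hR : R < a) :
    a * L + R ∈ H ↔ R ≤ L := by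
  constructor
  · intro hmem
    obtain ⟨L', R', hRL', heq⟩ := H_exists hH hmem
    obtain ⟨L'', R'', h1, h2, h3⟩ := H_norm ha R' L' hRL'
    obtain ⟨hL, hR2⟩ := aux_unique (L := L) (R := R) (L' := L'') (R' := R'') hR h1 (by omega)
    omega
  · intro h; exact HofLR hH h

lemma H_split (hH : H = AddSubmonoid.closure {a, a + 1}) (ha : 0 < a) {n : ℕ} (hn : n ∈ H) :
    ∃ μ ρ : ℕ, ρ < a ∧ ρ ≤ μ ∧ n = a * μ + ρ := by
  obtain ⟨L, R, hRL, rfl⟩ := H_exists hH hn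
  obtain ⟨L', R', h1, h2, h3⟩ := H_norm ha R L hRL
  exact ⟨L', R', h1, h2, h3⟩

lemma tp_pow (n : ℕ) (hn : n ∈ H) (e : ℕ) (hne : n * e ∈ H) :
    tp k H n hn ^ e = tp k H (n * e) hne := by
  apply Subtype.ext
  have : ((tp k H n hn ^ e : ssr k H) : PowerSeries k)
      = ((tp k H n hn : PowerSeries k)) ^ e := SubmonoidClass.coe_pow _ _
  rw [this, tp_val, tp_val, ← pow_mul]

lemma mpow_eq (hH : H = AddSubmonoid.closure {a, a + 1}) (ha : 0 < a)
    (haH : a ∈ H) (ha1H : a + 1 ∈ H) (𝔪 : Ideal (ssr k H))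
    (h𝔪 : 𝔪 = Ideal.span {tp k H a haH, tp k H (a + 1) ha1H}) (m : ℕ) :
    𝔪 ^ m = Ideal.span (tpSet k H {n | ∃ j ≤ m, n = a * m + j}) := by
  induction m with
  | zero =>
    rw [pow_zero]
    symm
    rw [Ideal.one_eq_top, Ideal.eq_top_iff_one]
    apply Ideal.subset_span
    refine ⟨0, ⟨0, le_refl 0, by ring⟩, H.zero_mem, ?_⟩
    apply Subtype.ext
    exact (pow_zero _).symm
  | succ m ih =>
    rw [pow_succ, ih, h𝔪, Ideal.span_mul_span']
    apply le_antisymm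
    · rw [Ideal.span_le]
      rintro z hz
      rw [Set.mem_mul] at hz
      obtain ⟨x, hx, y, hy, rfl⟩ := hz
      obtain ⟨n, ⟨j, hj, rfl⟩, hnH, rfl⟩ := hx
      rcases hy with rfl | hy
      · apply Ideal.subset_span
        rw [tp_mul]
        exact ⟨a * m + j + a, ⟨j, by omega, by ring⟩, _, rfl⟩
      · rw [Set.mem_singleton_iff] at hy
        subst hy
        apply Ideal.subset_span
        rw [tp_mul]
        exact ⟨a * m + j + (a + 1), ⟨j + 1, by omega, by ring⟩, _, rfl⟩
    · rw [Ideal.span_le]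
      rintro z ⟨n, ⟨j, hj, rfl⟩, hnH, rfl⟩
      apply Ideal.subset_span
      rcases Nat.lt_or_ge j (m + 1) with hjm | hjm
      · have hj' : j ≤ m := by omega
        refine ⟨tp k H (a * m + j) (HofLR hH hj'), ⟨a * m + j, ⟨j, hj', rfl⟩, _, rfl⟩,
          tp k H a haH, Set.mem_insert _ _, ?_⟩
        dsimp only
        rw [tp_mul]
        apply Subtype.ext
        rw [tp_val, tp_val]
        congr 1
        ring
      · have hj' : j = m + 1 := by omega
        subst hj'
        refine ⟨tp k H (a * m + m) (HofLR hH (le_refl m)), ⟨a * m + m, ⟨m, le_refl m, rfl⟩, _, rfl⟩,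
          tp k H (a + 1) ha1H, Set.mem_insert_of_mem _ rfl, ?_⟩
        dsimp only
        rw [tp_mul]
        apply Subtype.ext
        rw [tp_val, tp_val]
        congr 1
        ring

end Arith
/-- Proposition 3.5: if `q < a`, `s = aℓ + r < aq` with `1 ≤ ℓ < q`, `0 ≤ r < a`, and
`p = (a-1) + (ℓ-q)`, then `I = Q + 𝔪^{p+1} + (t^{ap+i} : p-ℓ+r < i ≤ p)`;
in particular `I = Q + 𝔪^p` when `r = 0`. -/
theorem stmt14 (k : Type) [Field k] (a : ℕ) (ha : 2 ≤ a)
    (H : AddSubmonoid ℕ) (hH : H = AddSubmonoid.closure {a, a + 1})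
    (haH : a ∈ H) (ha1H : a + 1 ∈ H)
    (q : ℕ) (hq : 0 < q) (hqa : q < a)
    (ℓ r p : ℕ) (hℓ1 : 1 ≤ ℓ) (hℓq : ℓ < q) (hr : r < a) (hp : p + q = a - 1 + ℓ)
    (s : ℕ) (hsval : s = a * ℓ + r) (hs : s ∈ H) (hsaq : s < a * q)
    (𝔪 : Ideal (ssr k H)) (h𝔪 : 𝔪 = Ideal.span {tp k H a haH, tp k H (a + 1) ha1H})
    (Q : Ideal (ssr k H)) (hQ : Q = Ideal.span {tp k H s hs})
    (I : Ideal (ssr k H)) (hI : I = Submodule.colon Q ((𝔪 ^ q : Ideal (ssr k H)) : Set (ssr k H))) :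
    I = Q ⊔ 𝔪 ^ (p + 1) ⊔
        Ideal.span {x : ssr k H |
          ∃ i : ℕ, p - ℓ + r < i ∧ i ≤ p ∧ ∃ hn : a * p + i ∈ H, x = tp k H (a * p + i) hn} ∧
    (r = 0 → I = Q ⊔ 𝔪 ^ p) := by
  subst hsval
  have ha0 : 0 < a := by omega
  have hrl : r ≤ ℓ := (H_canon hH ha0 (L := ℓ) (R := r) hr).mp hs
  have hpl : ℓ ≤ p := by omega
  have hpa : p + 1 < a := by omega
  -- the exponent set of the RHS ideal
  set G : Set ℕ := ({a * ℓ + r} ∪ {n | ∃ j ≤ p + 1, n = a * (p + 1) + j}) ∪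
      {n | ∃ i, p - ℓ + r < i ∧ i ≤ p ∧ n = a * p + i} with hG
  have hGfin : G.Finite := by
    apply Set.Finite.subset (Set.finite_Iic (a * ℓ + r + (a * (p+1) + (p+1)) + (a * p + p)))
    rintro n hn
    simp only [hG, Set.mem_union, Set.mem_singleton_iff, Set.mem_setOf_eq] at hn
    rcases hn with (rfl | ⟨j, hj, rfl⟩) | ⟨i, hi1, hi2, rfl⟩ <;> simp only [Set.mem_Iic] <;> omega
  have hGH : ∀ n ∈ G, n ∈ H := by
    intro n hn
    simp only [hG, Set.mem_union, Set.mem_singleton_iff, Set.mem_setOf_eq] at hn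
    rcases hn with (rfl | ⟨j, hj, rfl⟩) | ⟨i, hi1, hi2, rfl⟩
    · exact hs
    · exact HofLR hH (by omega)
    · exact HofLR hH (by omega)
  -- Q as a monomial span
  have hQset : ({tp k H (a * ℓ + r) hs} : Set (ssr k H)) = tpSet k H {a * ℓ + r} := by
    ext x
    constructor
    · rintro rfl; exact ⟨a * ℓ + r, rfl, hs, rfl⟩
    · rintro ⟨n, rfl, hn, rfl⟩; rfl
  -- membership in Q after multiplication by a monomial
  have hQmul : ∀ (n : ℕ) (hn : n ∈ H) (f : ssr k H),
      f * tp k H n hn ∈ Q ↔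
        ∀ m : ℕ, PowerSeries.coeff m (f : PowerSeries k) ≠ 0 →
          ∃ h ∈ H, m + n = a * ℓ + r + h := by
    intro n hn f
    rw [hQ, hQset, mem_span_tpSet_iff (Set.finite_singleton _) (by rintro _ rfl; exact hs)]
    constructor
    · intro hOK m hm
      have hcm : PowerSeries.coeff (m + n) ((f * tp k H n hn : ssr k H) : PowerSeries k) ≠ 0 := by
        have : ((f * tp k H n hn : ssr k H) : PowerSeries k)
            = (f : PowerSeries k) * PowerSeries.X ^ n := rfl
        rw [this, PowerSeries.coeff_mul_X_pow]
        exact hm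
      obtain ⟨n', hn', h, hh, heq⟩ := hOK (m + n) hcm
      rw [Set.mem_singleton_iff] at hn'
      subst hn'
      exact ⟨h, hh, heq⟩
    · intro hcond m' hm'
      have : PowerSeries.coeff m' ((f : PowerSeries k) * PowerSeries.X ^ n) ≠ 0 := hm'
      rw [PowerSeries.coeff_mul_X_pow'] at this
      split_ifs at this with hle
      · obtain ⟨h, hh, heq⟩ := hcond _ this
        exact ⟨a * ℓ + r, rfl, h, hh, by omega⟩
      · exact absurd rfl this
  -- characterization of the colon ideal
  have hIchar : ∀ f : ssr k H, f ∈ I ↔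
      ∀ m : ℕ, PowerSeries.coeff m (f : PowerSeries k) ≠ 0 →
        ∀ j ≤ q, ∃ h ∈ H, m + (a * q + j) = a * ℓ + r + h := by
    intro f
    rw [hI]
    constructor
    · intro hf m hm j hj
      have hmem : tp k H (a * q + j) (HofLR hH hj) ∈ 𝔪 ^ q := by
        rw [mpow_eq hH ha0 haH ha1H 𝔪 h𝔪 q]
        exact Ideal.subset_span ⟨a * q + j, ⟨j, hj, rfl⟩, HofLR hH hj, rfl⟩
      have := Submodule.mem_colon.mp hf _ hmem
      rw [smul_eq_mul] at this
      exact (hQmul _ _ f).mp this m hm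
    · intro hcond
      rw [Submodule.mem_colon]
      intro g hg
      rw [mpow_eq hH ha0 haH ha1H 𝔪 h𝔪 q] at hg
      rw [smul_eq_mul]
      refine Submodule.span_induction ?_ ?_ ?_ ?_ hg
      · rintro x ⟨n, ⟨j, hj, rfl⟩, hn, rfl⟩
        exact (hQmul _ hn f).mpr (fun m hm => hcond m hm j hj)
      · simp
      · intro x y _ _ hx hy
        rw [mul_add]
        exact Ideal.add_mem _ hx hy
      · intro c x _ hx
        rw [smul_eq_mul, show f * (c * x) = c * (f * x) by ring]
        exact Ideal.mul_mem_left _ _ hx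
  -- the RHS ideal is the monomial span on G
  have hXset : {x : ssr k H |
        ∃ i : ℕ, p - ℓ + r < i ∧ i ≤ p ∧ ∃ hn : a * p + i ∈ H, x = tp k H (a * p + i) hn}
      = tpSet k H {n | ∃ i, p - ℓ + r < i ∧ i ≤ p ∧ n = a * p + i} := by
    ext x
    constructor
    · rintro ⟨i, h1, h2, hn, rfl⟩
      exact ⟨a * p + i, ⟨i, h1, h2, rfl⟩, hn, rfl⟩
    · rintro ⟨n, ⟨i, h1, h2, rfl⟩, hn, rfl⟩
      exact ⟨i, h1, h2, hn, rfl⟩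
  have hRHS : Q ⊔ 𝔪 ^ (p + 1) ⊔
      Ideal.span {x : ssr k H |
        ∃ i : ℕ, p - ℓ + r < i ∧ i ≤ p ∧ ∃ hn : a * p + i ∈ H, x = tp k H (a * p + i) hn}
      = Ideal.span (tpSet k H G) := by
    rw [hQ, hQset, mpow_eq hH ha0 haH ha1H 𝔪 h𝔪 (p + 1), hXset, ← Ideal.span_union,
      ← Ideal.span_union, hG, tpSet_union, tpSet_union]
  -- the arithmetic core
  have core : ∀ m, m ∈ H →
      ((∀ j ≤ q, ∃ h ∈ H, m + (a * q + j) = a * ℓ + r + h) ↔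
        (∃ n ∈ G, ∃ h ∈ H, m = n + h)) := by
    intro m hm
    constructor
    · intro hc
      obtain ⟨μ, ρ, hρa, hρμ, rfl⟩ := H_split hH ha0 hm
      rcases Nat.lt_or_ge μ (p + 1) with hμp | hμp
      · rcases Nat.lt_or_ge ρ r with hρr | hρr
        · -- ρ < r : contradiction
          exfalso
          obtain ⟨h, hh, heq⟩ := hc (r - ρ - 1) (by omega)
          have hx1 : a * (μ + q) = a * μ + a * q := by ring
          have hx2 : a * (μ + q) = a * ℓ + a * (μ + q - ℓ - 1) + a := by
            obtain ⟨w, hw⟩ : ∃ w, μ + q - ℓ - 1 = w := ⟨_, rfl⟩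
            rw [hw]
            have h5 : μ + q = ℓ + w + 1 := by omega
            rw [h5]; ring
          have hhval : h = a * (μ + q - ℓ - 1) + (a - 1) := by omega
          have hle := (H_canon hH ha0 (L := μ + q - ℓ - 1) (R := a - 1) (by omega)).mp
            (hhval ▸ hh)
          omega
        · rcases Nat.lt_or_ge (ρ - r + q) a with hcase | hcase
          · -- j = q gives m ∈ s + H
            obtain ⟨h, hh, heq⟩ := hc q (le_refl q)
            have hx1 : a * (μ + q) = a * μ + a * q := by ring
            have hx2 : a * (μ + q) = a * ℓ + a * (μ + q - ℓ) := by
              obtain ⟨w, hw⟩ : ∃ w, μ + q - ℓ = w := ⟨_, rfl⟩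
              rw [hw]
              have h5 : μ + q = ℓ + w := by omega
              rw [h5]; ring
            have hhval : h = a * (μ + q - ℓ) + (ρ - r + q) := by omega
            have hle := (H_canon hH ha0 (L := μ + q - ℓ) (R := ρ - r + q) hcase).mp
              (hhval ▸ hh)
            obtain ⟨δ, hδ⟩ : ∃ δ, μ = ℓ + δ := ⟨μ - ℓ, by omega⟩
            subst hδ
            have hx3 : a * (ℓ + δ) = a * ℓ + a * δ := by ring
            exact ⟨a * ℓ + r, Or.inl (Or.inl rfl), a * δ + (ρ - r), HofLR hH (by omega),
              by omega⟩
          · -- j = a - 1 - (ρ - r) forces μ = p, ρ > p - ℓ + r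
            obtain ⟨h, hh, heq⟩ := hc (a - 1 - (ρ - r)) (by omega)
            have hx1 : a * (μ + q) = a * μ + a * q := by ring
            have hx2 : a * (μ + q) = a * ℓ + a * (μ + q - ℓ) := by
              obtain ⟨w, hw⟩ : ∃ w, μ + q - ℓ = w := ⟨_, rfl⟩
              rw [hw]
              have h5 : μ + q = ℓ + w := by omega
              rw [h5]; ring
            have hhval : h = a * (μ + q - ℓ) + (a - 1) := by omega
            have hle := (H_canon hH ha0 (L := μ + q - ℓ) (R := a - 1) (by omega)).mp
              (hhval ▸ hh)
            have hμ : μ = p := by omega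
            subst hμ
            exact ⟨a * μ + ρ, Or.inr ⟨ρ, by omega, by omega, rfl⟩, 0, H.zero_mem, by omega⟩
      · -- μ ≥ p + 1
        obtain ⟨δ, hδ⟩ : ∃ δ, μ = (p + 1) + δ := ⟨μ - (p + 1), by omega⟩
        subst hδ
        have hx1 : a * (p + 1 + δ) = a * (p + 1) + a * δ := by ring
        rcases le_or_gt ρ (p + 1) with hle | hlt
        · exact ⟨a * (p + 1) + ρ, Or.inl (Or.inr ⟨ρ, hle, rfl⟩), a * δ + 0,
            HofLR hH (by omega), by omega⟩
        · exact ⟨a * (p + 1) + (p + 1), Or.inl (Or.inr ⟨p + 1, le_refl _, rfl⟩),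
            a * δ + (ρ - (p + 1)), HofLR hH (by omega), by omega⟩
    · rintro ⟨n, hn, h, hh, rfl⟩ j hj
      simp only [hG, Set.mem_union, Set.mem_singleton_iff, Set.mem_setOf_eq] at hn
      rcases hn with (rfl | ⟨j', hj', rfl⟩) | ⟨i, hi1, hi2, rfl⟩
      · exact ⟨h + (a * q + j), add_mem hh (HofLR hH hj), by omega⟩
      · have h2 : a * (p + 1) + a * q = a * a + a * ℓ := by
          have e1 : a * (p + 1 + q) = a * (p + 1) + a * q := by ring
          have e2 : a * (p + 1 + q) = a * (a + ℓ) := by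
            have h1 : p + 1 + q = a + ℓ := by omega
            rw [h1]
          have e3 : a * (a + ℓ) = a * a + a * ℓ := by ring
          omega
        rcases le_or_gt r (j' + j) with hge | hlt
        · rcases le_or_gt (j' + j - r) a with hda | hda
          · exact ⟨a * a + (j' + j - r) + h, add_mem (HofLR hH hda) hh, by omega⟩
          · have h3 : a * (a + 1) = a * a + a := by ring
            exact ⟨a * (a + 1) + (j' + j - r - a) + h, add_mem (HofLR hH (by omega)) hh,
              by omega⟩
        · have h3 : a * a = a * (a - 1) + a := by
            have h5 : a - 1 + 1 = a := by omega
            calc a * a = a * (a - 1 + 1) := by rw [h5]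
              _ = a * (a - 1) + a := by ring
          exact ⟨a * (a - 1) + (a - (r - (j' + j))) + h, add_mem (HofLR hH (by omega)) hh,
            by omega⟩
      · have h2 : a * p + a * q = a * (a - 1) + a * ℓ := by
          have e1 : a * (p + q) = a * p + a * q := by ring
          have e2 : a * (p + q) = a * ((a - 1) + ℓ) := by rw [hp]
          have e3 : a * ((a - 1) + ℓ) = a * (a - 1) + a * ℓ := by ring
          omega
        rcases le_or_gt (i + j - r) (a - 1) with hea | hea
        · exact ⟨a * (a - 1) + (i + j - r) + h, add_mem (HofLR hH hea) hh, by omega⟩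
        · have h3 : a * a = a * (a - 1) + a := by
            have h5 : a - 1 + 1 = a := by omega
            calc a * a = a * (a - 1 + 1) := by rw [h5]
              _ = a * (a - 1) + a := by ring
          exact ⟨a * a + (i + j - r - a) + h, add_mem (HofLR hH (by omega)) hh, by omega⟩
  have main1 : I = Q ⊔ 𝔪 ^ (p + 1) ⊔
      Ideal.span {x : ssr k H |
        ∃ i : ℕ, p - ℓ + r < i ∧ i ≤ p ∧ ∃ hn : a * p + i ∈ H, x = tp k H (a * p + i) hn} := by
    rw [hRHS]
    ext f
    rw [hIchar f, mem_span_tpSet_iff hGfin hGH]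
    constructor
    · intro hc m hm
      have hmH : m ∈ H := by
        by_contra hmH
        exact hm (ssr_coeff f hmH)
      exact (core m hmH).mp (hc m hm)
    · intro hc m hm j hj
      have hmH : m ∈ H := by
        by_contra hmH
        exact hm (ssr_coeff f hmH)
      exact (core m hmH).mpr (hc m hm) j hj
  refine ⟨main1, ?_⟩
  intro hr0
  subst hr0
  -- second exponent set
  set G2 : Set ℕ := {a * ℓ + 0} ∪ {n | ∃ j ≤ p, n = a * p + j} with hG2
  have hG2fin : G2.Finite := by
    apply Set.Finite.subset (Set.finite_Iic (a * ℓ + 0 + (a * p + p)))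
    rintro n hn
    simp only [hG2, Set.mem_union, Set.mem_singleton_iff, Set.mem_setOf_eq] at hn
    rcases hn with rfl | ⟨j, hj, rfl⟩ <;> simp only [Set.mem_Iic] <;> omega
  have hG2H : ∀ n ∈ G2, n ∈ H := by
    intro n hn
    simp only [hG2, Set.mem_union, Set.mem_singleton_iff, Set.mem_setOf_eq] at hn
    rcases hn with rfl | ⟨j, hj, rfl⟩
    · exact hs
    · exact HofLR hH (by omega)
  have hRHS2 : Q ⊔ 𝔪 ^ p = Ideal.span (tpSet k H G2) := by
    rw [hQ, hQset, mpow_eq hH ha0 haH ha1H 𝔪 h𝔪 p, ← Ideal.span_union, hG2, tpSet_union]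
  have core2 : ∀ m : ℕ, (∃ n ∈ G, ∃ h ∈ H, m = n + h) ↔ (∃ n ∈ G2, ∃ h ∈ H, m = n + h) := by
    intro m
    have hx : a * (p + 1) = a * p + a := by ring
    constructor
    · rintro ⟨n, hn, h, hh, rfl⟩
      simp only [hG, Set.mem_union, Set.mem_singleton_iff, Set.mem_setOf_eq] at hn
      rcases hn with (rfl | ⟨j, hj, rfl⟩) | ⟨i, hi1, hi2, rfl⟩
      · exact ⟨a * ℓ + 0, Or.inl rfl, h, hh, rfl⟩
      · rcases le_or_gt j p with hjp | hjp
        · exact ⟨a * p + j, Or.inr ⟨j, hjp, rfl⟩, a + h, add_mem haH hh, by omega⟩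
        · have hj1 : j = p + 1 := by omega
          subst hj1
          exact ⟨a * p + p, Or.inr ⟨p, le_refl _, rfl⟩, (a + 1) + h, add_mem ha1H hh, by omega⟩
      · exact ⟨a * p + i, Or.inr ⟨i, hi2, rfl⟩, h, hh, rfl⟩
    · rintro ⟨n, hn, h, hh, rfl⟩
      simp only [hG2, Set.mem_union, Set.mem_singleton_iff, Set.mem_setOf_eq] at hn
      rcases hn with rfl | ⟨j, hj, rfl⟩
      · exact ⟨a * ℓ + 0, Or.inl (Or.inl rfl), h, hh, rfl⟩
      · rcases le_or_gt j (p - ℓ) with hjl | hjl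
        · have hδ : ℓ + (p - ℓ) = p := by omega
          have hx2 : a * (ℓ + (p - ℓ)) = a * ℓ + a * (p - ℓ) := by ring
          have hx3 : a * (ℓ + (p - ℓ)) = a * p := by rw [hδ]
          exact ⟨a * ℓ + 0, Or.inl (Or.inl rfl), (a * (p - ℓ) + j) + h,
            add_mem (HofLR hH (by omega)) hh, by omega⟩
        · exact ⟨a * p + j, Or.inr ⟨j, by omega, hj, rfl⟩, h, hh, rfl⟩
  rw [main1, hRHS, hRHS2]
  ext f
  rw [mem_span_tpSet_iff hGfin hGH, mem_span_tpSet_iff hG2fin hG2H]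
  constructor
  · intro hc m hm
    exact (core2 m).mp (hc m hm)
  · intro hc m hm
    exact (core2 m).mpr (hc m hm)
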